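/- Full convolution identity (intermediate step in the proof of Theorem 2): for all integers a, b ≥ 1, every sequence c : ℕ → ℚ, and all n, k ≥ 1, (an + (b−2)k + 2)·∑_{ℓ=0}^{k} ∑_{m=ℓ}^{n} q_c(n−m, k−ℓ)·q_c(m, ℓ) = 2·(an + (b−1)k + 1)·q_c(n,k), where the boundary terms use q_c(0,0) = 1 and q_c(m,0) = 0 for m > 0, and an + (b−2)k + 2 is computed in ℚ. -/

import Mathlib

/-- Weighted composition sum `P_c(n,k) = ∑ c_{m_1}⋯c_{m_k}` over compositions of `n`
into `k` positive parts; equals `(k!/n!)·B_{n,k}(1!c_1, 2!c_2, …)`. -/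
def Pc (c : ℕ → ℚ) (n k : ℕ) : ℚ :=
  ∑ f ∈ (Finset.Nat.antidiagonalTuple k n).filter (fun f => ∀ i, 0 < f i),
    ∏ i, c (f i)

/-- `q_c(n,k) = (1/(an+(b-1)k+1))·C(an+(b-1)k+1, k)·P_c(n,k)`. -/
def qc (a b : ℕ) (c : ℕ → ℚ) (n k : ℕ) : ℚ :=
  (1 / ((a * n + (b - 1) * k + 1 : ℕ) : ℚ)) *
    (((a * n + (b - 1) * k + 1).choose k : ℕ) : ℚ) * Pc c n k

namespace QcAux

open Finset

def T (n k : ℕ) : Finset (Fin k → ℕ) :=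
  (Finset.Nat.antidiagonalTuple k n).filter (fun f => ∀ i, 0 < f i)

lemma mem_T {n k : ℕ} {f : Fin k → ℕ} :
    f ∈ T n k ↔ (∑ i, f i) = n ∧ ∀ i, 0 < f i := by
  simp [T, Finset.mem_filter, Finset.Nat.mem_antidiagonalTuple]

lemma Pc_def (c : ℕ → ℚ) (n k : ℕ) : Pc c n k = ∑ f ∈ T n k, ∏ i, c (f i) := rfl

lemma Pc_k0 (c : ℕ → ℚ) (n : ℕ) : Pc c n 0 = if n = 0 then 1 else 0 := by
  rcases Nat.eq_zero_or_pos n with h | h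
  · subst h
    rw [Pc_def, if_pos rfl]
    have h1 : (finZeroElim : Fin 0 → ℕ) ∈ T 0 0 := by
      rw [mem_T]; constructor
      · simp
      · exact fun i => i.elim0
    rw [Finset.sum_eq_single_of_mem _ h1]
    · simp
    · intro g _ hg
      exact absurd (funext fun i => i.elim0) hg
  · rw [Pc_def, if_neg (Nat.pos_iff_ne_zero.mp h)]
    have : T n 0 = ∅ := by
      ext f
      simp only [mem_T, Finset.notMem_empty, iff_false, not_and]
      intro hs
      exact absurd hs (by simp; omega)
    simp [this]

lemma Pc_eq_zero_of_lt {c : ℕ → ℚ} {m ℓ : ℕ} (h : m < ℓ) : Pc c m ℓ = 0 := by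
  rw [Pc_def]
  have : T m ℓ = ∅ := by
    ext f
    simp only [mem_T, Finset.notMem_empty, iff_false, not_and]
    intro hs hpos
    have : ℓ ≤ m := by
      calc ℓ = ∑ _i : Fin ℓ, 1 := by simp
        _ ≤ ∑ i, f i := Finset.sum_le_sum (fun i _ => hpos i)
        _ = m := hs
    omega
  simp [this]

/-- decomposition along the first part, with arbitrary weight on the first part -/
lemma sum_T_succ (c : ℕ → ℚ) (u : ℕ → ℚ) (n k : ℕ) :
    ∑ f ∈ T n (k + 1), u (f 0) * ∏ i, c (f i)
      = ∑ j ∈ Finset.Icc 1 n, u j * (c j * Pc c (n - j) k) := by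
  have hRHS : ∑ j ∈ Finset.Icc 1 n, u j * (c j * Pc c (n - j) k)
      = ∑ p ∈ (Finset.Icc 1 n).sigma (fun j => T (n - j) k),
          u p.1 * (c p.1 * ∏ i, c (p.2 i)) := by
    rw [Finset.sum_sigma]
    refine Finset.sum_congr rfl (fun j _ => ?_)
    rw [Pc_def, Finset.mul_sum, Finset.mul_sum]
  rw [hRHS]
  refine (Finset.sum_nbij' (fun p => Fin.cons p.1 p.2) (fun f => ⟨f 0, Fin.tail f⟩)
    ?_ ?_ ?_ ?_ ?_).symm
  · rintro ⟨j, g⟩ hp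
    simp only [Finset.mem_sigma, Finset.mem_Icc, mem_T] at hp ⊢
    obtain ⟨⟨hj1, hjn⟩, hgsum, hgpos⟩ := hp
    refine ⟨?_, ?_⟩
    · rw [Fin.sum_cons, hgsum]; omega
    · intro i
      refine Fin.cases ?_ ?_ i
      · simpa using (show 0 < j from hj1)
      · intro i'; simpa using hgpos i'
  · intro f hf
    rw [mem_T] at hf
    obtain ⟨hsum, hpos⟩ := hf
    have h0 : f 0 + ∑ i, Fin.tail f i = n := by
      rw [← hsum, Fin.sum_univ_succ]; rfl
    simp only [Finset.mem_sigma, Finset.mem_Icc, mem_T]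
    refine ⟨⟨hpos 0, by omega⟩, by omega, fun i => hpos i.succ⟩
  · rintro ⟨j, g⟩ _
    simp [Fin.tail_cons]
  · intro f _
    exact Fin.cons_self_tail f
  · rintro ⟨j, g⟩ _
    rw [Fin.prod_univ_succ]
    simp only [Fin.cons_zero, Fin.cons_succ]

lemma Pc_succ (c : ℕ → ℚ) (n k : ℕ) :
    Pc c n (k + 1) = ∑ j ∈ Finset.Icc 1 n, c j * Pc c (n - j) k := by
  have := sum_T_succ c (fun _ => 1) n k
  simpa [Pc_def] using this

lemma swap_sum (c : ℕ → ℚ) (n k : ℕ) (i0 : Fin (k + 1)) :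
    ∑ f ∈ T n (k + 1), (f i0 : ℚ) * ∏ i, c (f i)
      = ∑ f ∈ T n (k + 1), (f 0 : ℚ) * ∏ i, c (f i) := by
  refine Finset.sum_nbij' (fun f => f ∘ (Equiv.swap 0 i0))
    (fun f => f ∘ (Equiv.swap 0 i0)) ?_ ?_ ?_ ?_ ?_
  · intro f hf
    rw [mem_T] at hf ⊢
    exact ⟨by rw [← hf.1]; exact Equiv.sum_comp _ f, fun i => hf.2 _⟩
  · intro f hf
    rw [mem_T] at hf ⊢
    exact ⟨by rw [← hf.1]; exact Equiv.sum_comp _ f, fun i => hf.2 _⟩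
  · intro f _
    funext i
    simp [Function.comp, Equiv.swap_apply_self]
  · intro f _
    funext i
    simp [Function.comp, Equiv.swap_apply_self]
  · intro f _
    simp only [Function.comp_apply, Equiv.swap_apply_left]
    congr 1
    exact (Equiv.prod_comp (Equiv.swap 0 i0) (fun i => c (f i))).symm

lemma Pc_weighted (c : ℕ → ℚ) (n k : ℕ) :
    ((k : ℚ) + 1) * ∑ j ∈ Finset.Icc 1 n, (j : ℚ) * (c j * Pc c (n - j) k)
      = (n : ℚ) * Pc c n (k + 1) := by
  have h1 : (n : ℚ) * Pc c n (k + 1)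
      = ∑ f ∈ T n (k + 1), (∑ i, (f i : ℚ)) * ∏ i, c (f i) := by
    rw [Pc_def, Finset.mul_sum]
    refine Finset.sum_congr rfl (fun f hf => ?_)
    rw [mem_T] at hf
    congr 1
    rw [← hf.1]
    push_cast
    ring
  have h2 : ∑ f ∈ T n (k + 1), (∑ i, (f i : ℚ)) * ∏ i, c (f i)
      = ∑ i : Fin (k + 1), ∑ f ∈ T n (k + 1), (f i : ℚ) * ∏ i, c (f i) := by
    rw [Finset.sum_comm]
    refine Finset.sum_congr rfl (fun f _ => ?_)
    rw [Finset.sum_mul]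
  have h3 : ∀ i0 : Fin (k + 1), ∑ f ∈ T n (k + 1), (f i0 : ℚ) * ∏ i, c (f i)
      = ∑ j ∈ Finset.Icc 1 n, (j : ℚ) * (c j * Pc c (n - j) k) := by
    intro i0
    rw [swap_sum c n k i0]
    exact sum_T_succ c (fun j => (j : ℚ)) n k
  rw [h1, h2]
  rw [Finset.sum_congr rfl (fun i _ => h3 i)]
  rw [Finset.sum_const, Finset.card_univ, Fintype.card_fin, nsmul_eq_mul]
  push_cast
  ring


/-- generalized Raney-type numbers -/
def Qa (a b : ℕ) (c : ℕ → ℚ) (r n k : ℕ) : ℚ :=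
  if r = 0 then (if n = 0 ∧ k = 0 then 1 else 0)
  else ((r : ℚ) / ((a * n + (b - 1) * k + r : ℕ) : ℚ)) *
    (((a * n + (b - 1) * k + r).choose k : ℕ) : ℚ) * Pc c n k

lemma Qa_k0 (a b : ℕ) (c : ℕ → ℚ) (r n : ℕ) :
    Qa a b c r n 0 = if n = 0 then 1 else 0 := by
  rcases Nat.eq_zero_or_pos r with hr | hr
  · subst hr; simp [Qa]
  · have hrQ : ((r : ℚ)) ≠ 0 := by exact_mod_cast Nat.pos_iff_ne_zero.mp hr
    rw [Qa, if_neg (by omega), Pc_k0]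
    rcases Nat.eq_zero_or_pos n with hn | hn
    · subst hn
      simp [div_self hrQ]
    · have hn' : n ≠ 0 := by omega
      simp [hn']

lemma Qa_eq_formula (a b : ℕ) (c : ℕ → ℚ) (r n k : ℕ)
    (h : 0 < a * n + (b - 1) * k + r) :
    Qa a b c r n k = ((r : ℚ) / ((a * n + (b - 1) * k + r : ℕ) : ℚ)) *
      (((a * n + (b - 1) * k + r).choose k : ℕ) : ℚ) * Pc c n k := by
  rcases Nat.eq_zero_or_pos r with hr | hr
  · subst hr
    rw [Qa, if_pos rfl]
    have hnk : ¬(n = 0 ∧ k = 0) := by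
      rintro ⟨rfl, rfl⟩; simp at h
    rw [if_neg hnk]
    simp
  · rw [Qa, if_neg (by omega)]

lemma Qa_eq_zero {a b : ℕ} {c : ℕ → ℚ} {r n k : ℕ} (hk : k ≠ 0)
    (hPc : Pc c n k = 0) : Qa a b c r n k = 0 := by
  rcases Nat.eq_zero_or_pos r with hr | hr
  · subst hr
    rw [Qa, if_pos rfl, if_neg (by tauto)]
  · rw [Qa, if_neg (by omega), hPc, mul_zero]

lemma Qa_rec (a b : ℕ) (ha : 1 ≤ a) (hb : 1 ≤ b) (c : ℕ → ℚ) (r n k : ℕ) :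
    Qa a b c (r + 1) n (k + 1)
      = Qa a b c r n (k + 1)
        + ∑ j ∈ Finset.Icc 1 n, c j * Qa a b c (r + a * j + (b - 1)) (n - j) k := by
  rcases Nat.eq_zero_or_pos n with hn | hn
  · subst hn
    have hP : Pc c 0 (k + 1) = 0 := Pc_eq_zero_of_lt (Nat.succ_pos k)
    rw [Qa_eq_zero (Nat.succ_ne_zero k) hP, Qa_eq_zero (Nat.succ_ne_zero k) hP]
    simp
  -- main case : n ≥ 1
  set E := a * n + (b - 1) * (k + 1) with hE
  have hE1 : 1 ≤ E := le_trans (Nat.mul_pos ha hn) (Nat.le_add_right (a*n) _)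
  set M := E + r with hM
  -- rewrite each summand
  have hsum : ∀ j ∈ Finset.Icc 1 n,
      c j * Qa a b c (r + a * j + (b - 1)) (n - j) k
        = (((M.choose k : ℕ) : ℚ) / (M : ℚ)) *
            (((r : ℚ) + (a : ℚ) * (j : ℚ) + ((b : ℚ) - 1)) * (c j * Pc c (n - j) k)) := by
    intro j hj
    rw [Finset.mem_Icc] at hj
    have hr' : 1 ≤ r + a * j + (b - 1) := by nlinarith [hj.1]
    have hD : a * (n - j) + (b - 1) * k + (r + a * j + (b - 1)) = M := by
      have h1 : a * (n - j) + a * j = a * n := by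
        rw [← Nat.mul_add, Nat.sub_add_cancel hj.2]
      have h2 : (b - 1) * k + (b - 1) = (b - 1) * (k + 1) := by ring
      omega
    rw [Qa_eq_formula a b c _ (n - j) k (by omega), hD]
    have hcast : (((r + a * j + (b - 1) : ℕ)) : ℚ)
        = (r : ℚ) + (a : ℚ) * (j : ℚ) + ((b : ℚ) - 1) := by
      push_cast [Nat.cast_sub hb]
      ring
    rw [hcast]
    ring
  rw [Finset.sum_congr rfl hsum, ← Finset.mul_sum]
  have hsplit : ∑ j ∈ Finset.Icc 1 n,
      (((r : ℚ) + (a : ℚ) * (j : ℚ) + ((b : ℚ) - 1)) * (c j * Pc c (n - j) k))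
      = ((r : ℚ) + (b : ℚ) - 1) * Pc c n (k + 1)
        + (a : ℚ) * ((n : ℚ) * Pc c n (k + 1) / ((k : ℚ) + 1)) := by
    have hw := Pc_weighted c n k
    have hk1 : ((k : ℚ) + 1) ≠ 0 := by positivity
    have hws : ∑ j ∈ Finset.Icc 1 n, (j : ℚ) * (c j * Pc c (n - j) k)
        = (n : ℚ) * Pc c n (k + 1) / ((k : ℚ) + 1) := by
      rw [eq_div_iff hk1, ← hw]
      ring
    calc ∑ j ∈ Finset.Icc 1 n,
        (((r : ℚ) + (a : ℚ) * (j : ℚ) + ((b : ℚ) - 1)) * (c j * Pc c (n - j) k))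
        = ((r : ℚ) + (b : ℚ) - 1) * ∑ j ∈ Finset.Icc 1 n, c j * Pc c (n - j) k
          + (a : ℚ) * ∑ j ∈ Finset.Icc 1 n, (j : ℚ) * (c j * Pc c (n - j) k) := by
          rw [Finset.mul_sum, Finset.mul_sum, ← Finset.sum_add_distrib]
          exact Finset.sum_congr rfl (fun j _ => by ring)
      _ = ((r : ℚ) + (b : ℚ) - 1) * Pc c n (k + 1)
          + (a : ℚ) * ((n : ℚ) * Pc c n (k + 1) / ((k : ℚ) + 1)) := by
          rw [← Pc_succ, hws]
  rw [hsplit]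
  -- now pure binomial algebra
  rw [Qa_eq_formula a b c (r + 1) n (k + 1) (by omega),
    Qa_eq_formula a b c r n (k + 1) (by omega)]
  have hidx1 : a * n + (b - 1) * (k + 1) + (r + 1) = M + 1 := by omega
  have hidx2 : a * n + (b - 1) * (k + 1) + r = M := by omega
  rw [hidx1, hidx2]
  have hMpos : 1 ≤ M := by omega
  have hMQ : ((M : ℕ) : ℚ) ≠ 0 := by exact_mod_cast Nat.pos_iff_ne_zero.mp hMpos
  have hk1 : ((k : ℚ) + 1) ≠ 0 := by positivity
  have hXY : (((M : ℕ) : ℚ) + 1) * ((M.choose k : ℕ) : ℚ)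
      = (((M + 1).choose (k + 1) : ℕ) : ℚ) * ((k : ℚ) + 1) := by
    have h := Nat.add_one_mul_choose_eq M k
    have h' : (M + 1) * M.choose k = (M + 1).choose (k + 1) * (k + 1) := by
      simpa [Nat.succ_eq_add_one] using h
    exact_mod_cast h'
  have hPas : (((M + 1).choose (k + 1) : ℕ) : ℚ)
      = ((M.choose k : ℕ) : ℚ) + ((M.choose (k + 1) : ℕ) : ℚ) := by
    exact_mod_cast congrArg (fun x : ℕ => (x : ℚ)) (Nat.choose_succ_succ M k)
  have hEcast : ((E : ℕ) : ℚ) = (a : ℚ) * (n : ℚ) + ((b : ℚ) - 1) * ((k : ℚ) + 1) := by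
    rw [hE]
    push_cast [Nat.cast_sub hb]
    ring
  have hMcast : ((M : ℕ) : ℚ) = ((E : ℕ) : ℚ) + (r : ℚ) := by
    rw [hM]; push_cast; ring
  set X := (((M + 1).choose (k + 1) : ℕ) : ℚ) with hX
  set Y := ((M.choose k : ℕ) : ℚ) with hY
  set Z := ((M.choose (k + 1) : ℕ) : ℚ) with hZ
  set P := Pc c n (k + 1) with hP
  have key : ((r : ℚ) + 1) * ((M : ℕ) : ℚ) * ((k : ℚ) + 1) * X
      = (r : ℚ) * (((M : ℕ) : ℚ) + 1) * ((k : ℚ) + 1) * Z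
        + (((M : ℕ) : ℚ) + 1) * Y *
            (((r : ℚ) + (b : ℚ) - 1) * ((k : ℚ) + 1) + (a : ℚ) * (n : ℚ)) := by
    linear_combination ((r : ℚ) * (((M : ℕ) : ℚ) + 1) * ((k : ℚ) + 1)) * hPas
      + ((((M : ℕ) : ℚ) + 1) * Y) * hEcast
      + (-((E : ℕ) : ℚ)) * hXY
      + (((k : ℚ) + 1) * X) * hMcast
  have hM1Q : (((M : ℕ) : ℚ) + 1) ≠ 0 := by positivity
  push_cast
  field_simp
  linear_combination P * key


lemma conv (a b : ℕ) (ha : 1 ≤ a) (hb : 1 ≤ b) (c : ℕ → ℚ) :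
    ∀ k r s n, (∑ ℓ ∈ Finset.range (k + 1), ∑ m ∈ Finset.range (n + 1),
        Qa a b c r m ℓ * Qa a b c s (n - m) (k - ℓ)) = Qa a b c (r + s) n k := by
  intro k
  induction k with
  | zero =>
    intro r s n
    rw [Finset.sum_range_one]
    rw [Finset.sum_eq_single 0]
    · rw [Qa_k0, Qa_k0, Qa_k0]
      simp
    · intro m _ hm
      rw [Qa_k0, if_neg hm, zero_mul]
    · intro h
      exact absurd (Finset.mem_range.mpr (Nat.succ_pos n)) h
  | succ k IHk =>
    intro r
    induction r with
    | zero =>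
      intro s n
      rw [Finset.sum_eq_single 0]
      · rw [Finset.sum_eq_single 0]
        · rw [Qa, if_pos rfl, if_pos ⟨rfl, rfl⟩]
          simp
        · intro m _ hm
          rw [Qa, if_pos rfl, if_neg (by tauto), zero_mul]
        · intro h
          exact absurd (Finset.mem_range.mpr (Nat.succ_pos n)) h
      · intro ℓ _ hℓ
        refine Finset.sum_eq_zero (fun m _ => ?_)
        rw [Qa, if_pos rfl, if_neg (by tauto), zero_mul]
      · intro h
        exact absurd (Finset.mem_range.mpr (Nat.succ_pos (k + 1))) h
    | succ r IHr =>
      intro s n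
      have hD : (∑ ℓ ∈ Finset.range (k + 1 + 1), ∑ m ∈ Finset.range (n + 1),
          Qa a b c (r + 1) m ℓ * Qa a b c s (n - m) (k + 1 - ℓ))
          - (∑ ℓ ∈ Finset.range (k + 1 + 1), ∑ m ∈ Finset.range (n + 1),
          Qa a b c r m ℓ * Qa a b c s (n - m) (k + 1 - ℓ))
          = ∑ j ∈ Finset.Icc 1 n, c j * Qa a b c (r + s + a * j + (b - 1)) (n - j) k := by
        rw [← Finset.sum_sub_distrib]
        have hterm : ∀ ℓ ∈ Finset.range (k + 1 + 1),
            ((∑ m ∈ Finset.range (n + 1),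
              Qa a b c (r + 1) m ℓ * Qa a b c s (n - m) (k + 1 - ℓ))
            - ∑ m ∈ Finset.range (n + 1),
              Qa a b c r m ℓ * Qa a b c s (n - m) (k + 1 - ℓ))
            = ∑ m ∈ Finset.range (n + 1),
              (Qa a b c (r + 1) m ℓ - Qa a b c r m ℓ) * Qa a b c s (n - m) (k + 1 - ℓ) := by
          intro ℓ _
          rw [← Finset.sum_sub_distrib]
          exact Finset.sum_congr rfl (fun m _ => (sub_mul _ _ _).symm)
        rw [Finset.sum_congr rfl hterm]
        rw [Finset.sum_range_succ']
        have hzero : (∑ m ∈ Finset.range (n + 1),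
            (Qa a b c (r + 1) m 0 - Qa a b c r m 0) * Qa a b c s (n - m) (k + 1 - 0)) = 0 := by
          refine Finset.sum_eq_zero (fun m _ => ?_)
          rw [Qa_k0, Qa_k0, sub_self, zero_mul]
        rw [hzero, add_zero]
        have hstep : ∀ ℓ ∈ Finset.range (k + 1), ∀ m ∈ Finset.range (n + 1),
            (Qa a b c (r + 1) m (ℓ + 1) - Qa a b c r m (ℓ + 1))
              * Qa a b c s (n - m) (k + 1 - (ℓ + 1))
            = ∑ j ∈ Finset.Icc 1 m,
                c j * (Qa a b c (r + a * j + (b - 1)) (m - j) ℓ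
                  * Qa a b c s (n - m) (k - ℓ)) := by
          intro ℓ _ m _
          have hr := Qa_rec a b ha hb c r m ℓ
          have hk1 : k + 1 - (ℓ + 1) = k - ℓ := by omega
          rw [hk1, hr, add_sub_cancel_left, Finset.sum_mul]
          exact Finset.sum_congr rfl (fun j _ => by ring)
        rw [Finset.sum_congr rfl (fun ℓ hℓ =>
          Finset.sum_congr rfl (fun m hm => hstep ℓ hℓ m hm))]
        -- swap m and j sums
        have hswap : ∀ ℓ ∈ Finset.range (k + 1),
            (∑ m ∈ Finset.range (n + 1), ∑ j ∈ Finset.Icc 1 m,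
              c j * (Qa a b c (r + a * j + (b - 1)) (m - j) ℓ
                * Qa a b c s (n - m) (k - ℓ)))
            = ∑ j ∈ Finset.Icc 1 n, ∑ i ∈ Finset.range ((n - j) + 1),
              c j * (Qa a b c (r + a * j + (b - 1)) i ℓ
                * Qa a b c s ((n - j) - i) (k - ℓ)) := by
          intro ℓ _
          rw [Finset.sum_comm' (t' := Finset.Icc 1 n) (s' := fun j => Finset.Icc j n)
            (by intro m j; simp only [Finset.mem_range, Finset.mem_Icc]; omega)]
          refine Finset.sum_congr rfl (fun j hj => ?_)
          rw [Finset.mem_Icc] at hj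
          rw [← Finset.Ico_add_one_right_eq_Icc, Finset.sum_Ico_eq_sum_range,
            show n + 1 - j = (n - j) + 1 by omega]
          refine Finset.sum_congr rfl (fun i hi => ?_)
          rw [Finset.mem_range] at hi
          rw [show j + i - j = i by omega, show n - (j + i) = (n - j) - i by omega]
        rw [Finset.sum_congr rfl hswap]
        rw [Finset.sum_comm]
        refine Finset.sum_congr rfl (fun j hj => ?_)
        rw [Finset.mem_Icc] at hj
        have hpull : ∀ ℓ, ∑ i ∈ Finset.range ((n - j) + 1),
            c j * (Qa a b c (r + a * j + (b - 1)) i ℓ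
              * Qa a b c s ((n - j) - i) (k - ℓ))
            = c j * ∑ i ∈ Finset.range ((n - j) + 1),
              Qa a b c (r + a * j + (b - 1)) i ℓ
                * Qa a b c s ((n - j) - i) (k - ℓ) := by
          intro ℓ
          rw [Finset.mul_sum]
        rw [Finset.sum_congr rfl (fun ℓ _ => hpull ℓ), ← Finset.mul_sum]
        rw [IHk (r + a * j + (b - 1)) s (n - j)]
        congr 2
        omega
      have hrec := Qa_rec a b ha hb c (r + s) n k
      have hIHr := IHr s n
      have hfin : r + 1 + s = r + s + 1 := by omega
      rw [hfin]
      linarith [hD, hrec, hIHr]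


lemma qc_eq_Qa (a b : ℕ) (c : ℕ → ℚ) (n k : ℕ) :
    qc a b c n k = Qa a b c 1 n k := by
  rw [Qa, if_neg one_ne_zero, qc]
  norm_num

end QcAux

/-- Full convolution identity: intermediate step in the proof of Theorem 2. -/
theorem qc_full_convolution (a b : ℕ) (ha : 1 ≤ a) (hb : 1 ≤ b) (c : ℕ → ℚ)
    (n k : ℕ) (hn : 1 ≤ n) (hk : 1 ≤ k) :
    ((a : ℚ) * n + ((b : ℚ) - 2) * k + 2) *
        ∑ ℓ ∈ Finset.range (k + 1), ∑ m ∈ Finset.Icc ℓ n,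
          qc a b c (n - m) (k - ℓ) * qc a b c m ℓ
      = 2 * ((a * n + (b - 1) * k + 1 : ℕ) : ℚ) * qc a b c n k := by
  classical
  have hsum : ∑ ℓ ∈ Finset.range (k + 1), ∑ m ∈ Finset.Icc ℓ n,
      qc a b c (n - m) (k - ℓ) * qc a b c m ℓ
      = QcAux.Qa a b c 2 n k := by
    have h1 : ∀ ℓ ∈ Finset.range (k + 1),
        ∑ m ∈ Finset.Icc ℓ n, qc a b c (n - m) (k - ℓ) * qc a b c m ℓ
        = ∑ m ∈ Finset.range (n + 1),
            QcAux.Qa a b c 1 m ℓ * QcAux.Qa a b c 1 (n - m) (k - ℓ) := by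
      intro ℓ _
      have e1 : ∑ m ∈ Finset.Icc ℓ n, qc a b c (n - m) (k - ℓ) * qc a b c m ℓ
          = ∑ m ∈ Finset.Icc ℓ n,
              QcAux.Qa a b c 1 m ℓ * QcAux.Qa a b c 1 (n - m) (k - ℓ) :=
        Finset.sum_congr rfl (fun m _ => by
          rw [QcAux.qc_eq_Qa, QcAux.qc_eq_Qa]; ring)
      rw [e1]
      refine Finset.sum_subset (fun m hm => ?_) (fun m hm hm' => ?_)
      · rw [Finset.mem_Icc] at hm
        exact Finset.mem_range.mpr (by omega)
      · rw [Finset.mem_range] at hm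
        rw [Finset.mem_Icc] at hm'
        have hmℓ : m < ℓ := by omega
        rw [QcAux.Qa_eq_zero (by omega) (QcAux.Pc_eq_zero_of_lt hmℓ), zero_mul]
    rw [Finset.sum_congr rfl h1]
    have := QcAux.conv a b ha hb c k 1 1 n
    simpa using this
  rw [hsum, QcAux.Qa_eq_formula a b c 2 n k (by omega), qc]
  set E := a * n + (b - 1) * k with hE
  have hEcast : ((E : ℕ) : ℚ) = (a : ℚ) * (n : ℚ) + ((b : ℚ) - 1) * (k : ℚ) := by
    rw [hE]
    push_cast [Nat.cast_sub hb]
    ring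
  have hchoose : (((E : ℕ) : ℚ) + 2 - (k : ℚ)) * (((E + 2).choose k : ℕ) : ℚ)
      = (((E : ℕ) : ℚ) + 2) * (((E + 1).choose k : ℕ) : ℚ) := by
    rcases le_or_gt k (E + 2) with hkE | hkE
    · have h1 := Nat.choose_succ_right_eq (E + 2) k
      have h2 : (E + 1 + 1) * (E + 1).choose k
          = (E + 1 + 1).choose (k + 1) * (k + 1) := by
        simpa [Nat.succ_eq_add_one] using Nat.add_one_mul_choose_eq (E + 1) k
      have hee : E + 1 + 1 = E + 2 := by omega
      rw [hee] at h2
      have hnat : (E + 2 - k) * (E + 2).choose k = (E + 2) * (E + 1).choose k := by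
        calc (E + 2 - k) * (E + 2).choose k
            = (E + 2).choose k * (E + 2 - k) := Nat.mul_comm _ _
          _ = (E + 2).choose (k + 1) * (k + 1) := h1.symm
          _ = (E + 2) * (E + 1).choose k := h2.symm
      have hc2 : ((E + 2 - k : ℕ) : ℚ) = ((E : ℕ) : ℚ) + 2 - (k : ℚ) := by
        push_cast [Nat.cast_sub hkE]
        ring
      rw [← hc2]
      exact_mod_cast congrArg (fun x : ℕ => (x : ℚ)) hnat
    · rw [Nat.choose_eq_zero_of_lt hkE, Nat.choose_eq_zero_of_lt (by omega)]
      norm_num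
  have hE2 : ((E : ℕ) : ℚ) + 2 ≠ 0 := by positivity
  have hE1 : ((E : ℕ) : ℚ) + 1 ≠ 0 := by positivity
  have hc2 : (((E + 2 : ℕ)) : ℚ) = ((E : ℕ) : ℚ) + 2 := by push_cast; ring
  have hc1 : (((E + 1 : ℕ)) : ℚ) = ((E : ℕ) : ℚ) + 1 := by push_cast; ring
  rw [hc2, hc1]
  have hL : (a : ℚ) * (n : ℚ) + ((b : ℚ) - 2) * (k : ℚ) + 2
      = ((E : ℕ) : ℚ) + 2 - (k : ℚ) := by
    rw [hEcast]; ring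
  rw [hL]
  have h2cast : (((2 : ℕ)) : ℚ) = (2 : ℚ) := by norm_num
  rw [h2cast]
  set X2 := (((E + 2).choose k : ℕ) : ℚ) with hX2
  set X1 := (((E + 1).choose k : ℕ) : ℚ) with hX1
  set P := Pc c n k with hP
  field_simp
  linear_combination P * hchoose
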